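/- Let (M, h, ∇) be a quasi-statistical manifold such that ∇ is flat, with h symmetric (respectively skew-symmetric). Then (T*M, h̃_+, ∇̃) (respectively (T*M, h̃_−, ∇̃)) is a quasi-statistical manifold, where h̃_± are the Patterson-Walker tensors on T*M and ∇̃ is the pull-back connection of ∇̂ on T*M; that is, d^{∇̃} h̃_± = 0. -/

import Mathlib

namespace GQSCoord

open scoped BigOperators

variable {n : ℕ}

/-- Points of the manifold `M` in a fixed local coordinate system `{x^1,...,x^n}`. -/
abbrev Pt (n : ℕ) := Fin n → ℝ
/-- Points of the total space of `T*M` (resp. `TM`) in the induced coordinates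
`{x̃^i, y_i}` (resp. `{x̃^i, y^i}`). -/
abbrev Tot (n : ℕ) := (Fin n → ℝ) × (Fin n → ℝ)

/-- The partial derivative `∂f/∂x^i`. -/
noncomputable def pd (i : Fin n) (f : Pt n → ℝ) (x : Pt n) : ℝ :=
  fderiv ℝ f x (Pi.single i 1)

/-- The action of a vector field `U` on the total space on a function `f`. -/
noncomputable def act (U : Tot n → Tot n) (f : Tot n → ℝ) (z : Tot n) : ℝ :=
  fderiv ℝ f z (U z)

/-- The Lie bracket of vector fields on the total space. -/
noncomputable def lie (U V : Tot n → Tot n) (z : Tot n) : Tot n :=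
  fderiv ℝ V z (U z) - fderiv ℝ U z (V z)

/-- Smooth functions. -/
def Smooth {E F : Type*} [NormedAddCommGroup E] [NormedSpace ℝ E]
    [NormedAddCommGroup F] [NormedSpace ℝ F] (f : E → F) : Prop :=
  ContDiff ℝ (⊤ : ℕ∞) f

variable (Γ : Pt n → Fin n → Fin n → Fin n → ℝ) (h hinv : Pt n → Fin n → Fin n → ℝ)

/- We encode an affine connection `∇` on `M` by its Christoffel symbols,
`Γ x i j k = Γ^k_{ij}(x)`, i.e. `∇_{∂_i} ∂_j = Γ^k_{ij} ∂_k`, a `(0,2)`-tensor field `h` by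
its components `h x i j = h_{ij}(x)`, and its (two-sided pointwise) inverse by
`hinv x i j = h^{ij}(x)`. -/

/-- `(∇_{∂_i} h)_{jk}`. -/
noncomputable def covh (x : Pt n) (i j k : Fin n) : ℝ :=
  pd i (fun x' => h x' j k) x - ∑ l, Γ x i j l * h x l k - ∑ l, Γ x i k l * h x j l

/-- `(d^∇ h)(∂_i, ∂_j, ∂_k)`. -/
noncomputable def dnabla (x : Pt n) (i j k : Fin n) : ℝ :=
  covh Γ h x i j k - covh Γ h x j i k + ∑ l, (Γ x i j l - Γ x j i l) * h x l k

/-- The curvature `R^l_{ijk}`, with `R^∇(∂_i, ∂_j)∂_k = R^l_{ijk} ∂_l`. -/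
noncomputable def curv (x : Pt n) (i j k l : Fin n) : ℝ :=
  pd i (fun x' => Γ x' j k l) x - pd j (fun x' => Γ x' i k l) x
    + ∑ r, Γ x j k r * Γ x i r l - ∑ r, Γ x i k r * Γ x j r l

/-! ### The cotangent bundle `T*M` -/

/-- The coefficient `y_k Γ^k_{il}` of the horizontal lift on `T*M`. -/
def cstar (z : Tot n) (i l : Fin n) : ℝ := ∑ k, z.2 k * Γ z.1 i l k

/-- The horizontal lift `X_i^H = ∂/∂x̃^i + y_k Γ^k_{il} ∂/∂y_l` on `T*M`. -/
def XHstar (i : Fin n) (z : Tot n) : Tot n := (Pi.single i 1, fun l => cstar Γ z i l)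

/-- The vertical frame field `∂/∂y_j`. -/
def VV (j : Fin n) (z : Tot n) : Tot n := (0, Pi.single j 1)

/-- The horizontal frame components of a tangent vector at a point of the total space. -/
def hcv (v : Tot n) (i : Fin n) : ℝ := v.1 i

/-- The vertical frame components of a tangent vector `v` at `z ∈ T*M`. -/
def vcvstar (z v : Tot n) (l : Fin n) : ℝ := v.2 l - ∑ i, v.1 i * cstar Γ z i l

/-- The coefficients of `∇̃_{X_i^H} ∂/∂y_j = (∂h^{jk}/∂x^i + h^{jl}Γ^k_{il}) h_{rk} ∂/∂y_r`. -/
noncomputable def Cstar (x : Pt n) (i j r : Fin n) : ℝ :=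
  ∑ k, (pd i (fun x' => hinv x' j k) x + ∑ l, hinv x j l * Γ x i l k) * h x r k

/-- The pull-back connection `∇̃` of `∇̂` on `T*M`, defined on arbitrary vector fields: in the
adapted frame it is given by `∇̃_{X_i^H} X_j^H = Γ^k_{ij} X_k^H`,
`∇̃_{X_i^H} ∂/∂y_j = (∂h^{jk}/∂x^i + h^{jl}Γ^k_{il}) h_{rk} ∂/∂y_r`,
`∇̃_{∂/∂y_j} X_i^H = 0` and `∇̃_{∂/∂y_i} ∂/∂y_j = 0`. -/
noncomputable def tconnStar (U W : Tot n → Tot n) (z : Tot n) : Tot n :=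
  (∑ i, act U (fun w => hcv (W w) i) z • XHstar Γ i z)
  + (∑ l, act U (fun w => vcvstar Γ w (W w) l) z • VV l z)
  + (∑ i, ∑ j, (hcv (U z) i * hcv (W z) j) • (∑ k, Γ z.1 i j k • XHstar Γ k z))
  + (∑ i, ∑ j, (hcv (U z) i * vcvstar Γ z (W z) j) •
      (∑ r, Cstar Γ h hinv z.1 i j r • VV r z))

/-- The Sasaki tensor `h^{S*}` on `T*M`, determined by `h^{S*}(X^H, Y^H) = h(X,Y)`,
`h^{S*}(α^V, β^V) = h(h⁻¹α, h⁻¹β)` and `h^{S*}(α^V, Y^H) = h^{S*}(X^H, β^V) = 0`. -/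
noncomputable def sasakiStar (U W : Tot n → Tot n) (z : Tot n) : ℝ :=
  (∑ i, ∑ j, hcv (U z) i * hcv (W z) j * h z.1 i j)
  + ∑ i, ∑ j, vcvstar Γ z (U z) i * vcvstar Γ z (W z) j *
      (∑ r, ∑ s, hinv z.1 i r * hinv z.1 j s * h z.1 r s)

/-- The (generalized) Patterson-Walker tensor `h̃_ε` on `T*M` (`ε = 1` gives `h̃_+`, `ε = -1`
gives `h̃_-`), determined by `h̃_ε(X^H, Y^H) = 0`, `h̃_ε(α^V, β^V) = 0`,
`h̃_ε(α^V, X^H) = α(X)` and `h̃_ε(X^H, α^V) = ε α(X)`. -/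
def pwStar (ε : ℝ) (U W : Tot n → Tot n) (z : Tot n) : ℝ :=
  (∑ i, vcvstar Γ z (U z) i * hcv (W z) i) + ε * ∑ i, hcv (U z) i * vcvstar Γ z (W z) i

/-! ### The tangent bundle `TM` -/

/-- The coefficient `y^k Γ^l_{ik}` of the horizontal lift on `TM`. -/
def ctan (z : Tot n) (i l : Fin n) : ℝ := ∑ k, z.2 k * Γ z.1 i k l

/-- The horizontal lift `X_i^H = ∂/∂x̃^i − y^k Γ^l_{ik} ∂/∂y^l` on `TM`. -/
def XHtan (i : Fin n) (z : Tot n) : Tot n := (Pi.single i 1, fun l => - ctan Γ z i l)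

/-- The vertical frame components of a tangent vector `v` at `z ∈ TM`. -/
def vcvtan (z v : Tot n) (l : Fin n) : ℝ := v.2 l + ∑ i, v.1 i * ctan Γ z i l

/-- The connection `∇̃̃` on `TM`, defined on arbitrary vector fields: in the adapted frame it
is given by `∇̃̃_{X_i^H} X_j^H = Γ^k_{ij} X_k^H`, `∇̃̃_{X_i^H} ∂/∂y^j = Γ^k_{ij} ∂/∂y^k`,
`∇̃̃_{∂/∂y^j} X_i^H = 0` and `∇̃̃_{∂/∂y^i} ∂/∂y^j = 0`. -/
noncomputable def tconnTan (U W : Tot n → Tot n) (z : Tot n) : Tot n :=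
  (∑ i, act U (fun w => hcv (W w) i) z • XHtan Γ i z)
  + (∑ l, act U (fun w => vcvtan Γ w (W w) l) z • VV l z)
  + (∑ i, ∑ j, (hcv (U z) i * hcv (W z) j) • (∑ k, Γ z.1 i j k • XHtan Γ k z))
  + (∑ i, ∑ j, (hcv (U z) i * vcvtan Γ z (W z) j) • (∑ k, Γ z.1 i j k • VV k z))

/-- The Sasaki tensor `h^S` on `TM`, determined by `h^S(X^H, Y^H) = h(X,Y)`,
`h^S(X^V, Y^V) = h(X,Y)` and `h^S(X^H, Y^V) = h^S(X^V, Y^H) = 0`. -/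
noncomputable def sasakiTan (U W : Tot n → Tot n) (z : Tot n) : ℝ :=
  (∑ i, ∑ j, hcv (U z) i * hcv (W z) j * h z.1 i j)
  + ∑ i, ∑ j, vcvtan Γ z (U z) i * vcvtan Γ z (W z) j * h z.1 i j

/-- The horizontal lift `h^H` of `h` to `TM`, determined by `h^H(X^H, Y^H) = 0`,
`h^H(X^V, Y^V) = 0` and `h^H(X^H, Y^V) = h^H(X^V, Y^H) = h(X,Y)`. -/
noncomputable def horTan (U W : Tot n → Tot n) (z : Tot n) : ℝ :=
  (∑ i, ∑ j, hcv (U z) i * vcvtan Γ z (W z) j * h z.1 i j)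
  + ∑ i, ∑ j, vcvtan Γ z (U z) i * hcv (W z) j * h z.1 i j

/-! ### `d^D g` and curvature for connections on the total space -/

/-- `(d^D g)(U,V,W) = (D_U g)(V,W) − (D_V g)(U,W) + g(T^D(U,V), W)`. -/
noncomputable def dTensor (conn : (Tot n → Tot n) → (Tot n → Tot n) → Tot n → Tot n)
    (g : (Tot n → Tot n) → (Tot n → Tot n) → Tot n → ℝ)
    (U V W : Tot n → Tot n) (z : Tot n) : ℝ :=
  (act U (g V W) z - g (fun w => conn U V w) W z - g V (fun w => conn U W w) z)
  - (act V (g U W) z - g (fun w => conn V U w) W z - g U (fun w => conn V W w) z)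
  + g (fun w => conn U V w - conn V U w - lie U V w) W z

/-- The curvature operator `R^D(U,V)W` of a connection on the total space. -/
noncomputable def curvConn (conn : (Tot n → Tot n) → (Tot n → Tot n) → Tot n → Tot n)
    (U V W : Tot n → Tot n) (z : Tot n) : Tot n :=
  conn U (fun w => conn V W w) z - conn V (fun w => conn U W w) z - conn (lie U V) W z

/-! ### Auxiliary infrastructure -/

section AuxCalc

variable {E : Type*} [NormedAddCommGroup E] [NormedSpace ℝ E]

lemma Smooth.dAt {F : Type*} [NormedAddCommGroup F] [NormedSpace ℝ F]
    {f : E → F} (hf : Smooth f) (x : E) : DifferentiableAt ℝ f x :=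
  (hf.differentiable (by simp)).differentiableAt

end AuxCalc

section PD

variable {n : ℕ}

lemma pd_const (i : Fin n) (c : ℝ) (x : Pt n) : pd i (fun _ => c) x = 0 := by
  simp [pd]

lemma pd_sum {ι : Type*} (s : Finset ι) (f : ι → Pt n → ℝ) (i : Fin n) (x : Pt n)
    (hf : ∀ j ∈ s, DifferentiableAt ℝ (f j) x) :
    pd i (fun x' => ∑ j ∈ s, f j x') x = ∑ j ∈ s, pd i (f j) x := by
  simp [pd, fderiv_fun_sum hf]

lemma pd_mul (f g : Pt n → ℝ) (i : Fin n) (x : Pt n)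
    (hf : DifferentiableAt ℝ f x) (hg : DifferentiableAt ℝ g x) :
    pd i (fun x' => f x' * g x') x = pd i f x * g x + f x * pd i g x := by
  simp only [pd, fderiv_fun_mul hf hg, ContinuousLinearMap.add_apply,
    ContinuousLinearMap.smul_apply, smul_eq_mul]
  ring

lemma pd_const_mul (f : Pt n → ℝ) (c : ℝ) (i : Fin n) (x : Pt n)
    (hf : DifferentiableAt ℝ f x) :
    pd i (fun x' => c * f x') x = c * pd i f x := by
  simp [pd, fderiv_const_mul hf c]

lemma fderiv_pt_eq (g : Pt n → ℝ) (x : Pt n) (v : Pt n) :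
    fderiv ℝ g x v = ∑ j, v j * pd j g x := by
  have hv : v = ∑ j, v j • (Pi.single j (1 : ℝ) : Pt n) := by
    funext k
    simp [Finset.sum_apply, Pi.single_apply, mul_ite, Finset.sum_ite_eq]
  conv_lhs => rw [hv]
  rw [map_sum]
  exact Finset.sum_congr rfl fun j _ => by rw [map_smul]; rfl

end PD
section ACT

variable {n : ℕ}

lemma act_sum {ι : Type*} (U : Tot n → Tot n) (s : Finset ι) (f : ι → Tot n → ℝ)
    (z : Tot n) (hf : ∀ j ∈ s, DifferentiableAt ℝ (f j) z) :
    act U (fun w => ∑ j ∈ s, f j w) z = ∑ j ∈ s, act U (f j) z := by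
  simp [act, fderiv_fun_sum hf]

lemma act_mul (U : Tot n → Tot n) (f g : Tot n → ℝ) (z : Tot n)
    (hf : DifferentiableAt ℝ f z) (hg : DifferentiableAt ℝ g z) :
    act U (fun w => f w * g w) z = act U f z * g z + f z * act U g z := by
  simp only [act, fderiv_fun_mul hf hg, ContinuousLinearMap.add_apply,
    ContinuousLinearMap.smul_apply, smul_eq_mul]
  ring

lemma act_const_mul (U : Tot n → Tot n) (f : Tot n → ℝ) (c : ℝ) (z : Tot n)
    (hf : DifferentiableAt ℝ f z) :
    act U (fun w => c * f w) z = c * act U f z := by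
  simp [act, fderiv_const_mul hf c]

lemma act_add (U : Tot n → Tot n) (f g : Tot n → ℝ) (z : Tot n)
    (hf : DifferentiableAt ℝ f z) (hg : DifferentiableAt ℝ g z) :
    act U (fun w => f w + g w) z = act U f z + act U g z := by
  simp [act, fderiv_fun_add hf hg]

lemma act_sub (U : Tot n → Tot n) (f g : Tot n → ℝ) (z : Tot n)
    (hf : DifferentiableAt ℝ f z) (hg : DifferentiableAt ℝ g z) :
    act U (fun w => f w - g w) z = act U f z - act U g z := by
  simp [act, fderiv_fun_sub hf hg]

/-- The CLM giving the `l`-th horizontal coordinate. -/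
noncomputable def phiH (n : ℕ) (l : Fin n) : Tot n →L[ℝ] ℝ :=
  (ContinuousLinearMap.proj l).comp (ContinuousLinearMap.fst ℝ (Pt n) (Pt n))

/-- The CLM giving the `l`-th vertical coordinate. -/
noncomputable def phiV (n : ℕ) (l : Fin n) : Tot n →L[ℝ] ℝ :=
  (ContinuousLinearMap.proj l).comp (ContinuousLinearMap.snd ℝ (Pt n) (Pt n))

lemma act_fst (U V : Tot n → Tot n) (z : Tot n) (hV : Smooth V) (l : Fin n) :
    act U (fun w => (V w).1 l) z = (fderiv ℝ V z (U z)).1 l := by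
  have h1 : HasFDerivAt (fun w => (V w).1 l) ((phiH n l).comp (fderiv ℝ V z)) z :=
    ((phiH n l).hasFDerivAt).comp z (hV.dAt z).hasFDerivAt
  rw [act, h1.fderiv]; rfl

lemma act_snd (U V : Tot n → Tot n) (z : Tot n) (hV : Smooth V) (l : Fin n) :
    act U (fun w => (V w).2 l) z = (fderiv ℝ V z (U z)).2 l := by
  have h1 : HasFDerivAt (fun w => (V w).2 l) ((phiV n l).comp (fderiv ℝ V z)) z :=
    ((phiV n l).hasFDerivAt).comp z (hV.dAt z).hasFDerivAt
  rw [act, h1.fderiv]; rfl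

lemma act_snd_coord (U : Tot n → Tot n) (z : Tot n) (k : Fin n) :
    act U (fun w : Tot n => w.2 k) z = (U z).2 k := by
  have h1 : HasFDerivAt (fun w : Tot n => w.2 k) (phiV n k) z := (phiV n k).hasFDerivAt
  rw [act, h1.fderiv]; rfl

lemma act_base (U : Tot n → Tot n) (g : Pt n → ℝ) (z : Tot n) (hg : Smooth g) :
    act U (fun w => g w.1) z = ∑ j, (U z).1 j * pd j g z.1 := by
  have h1 : HasFDerivAt (fun w : Tot n => g w.1)
      ((fderiv ℝ g z.1).comp (ContinuousLinearMap.fst ℝ (Pt n) (Pt n))) z :=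
    (hg.dAt z.1).hasFDerivAt.comp z hasFDerivAt_fst
  rw [act, h1.fderiv]
  show fderiv ℝ g z.1 (U z).1 = _
  rw [fderiv_pt_eq]

end ACT

section SmoothLemmas

variable {n : ℕ} (Γ : Pt n → Fin n → Fin n → Fin n → ℝ)

lemma smooth_hcomp {V : Tot n → Tot n} (hV : Smooth V) (l : Fin n) :
    Smooth (fun w => (V w).1 l) := ((phiH n l).contDiff).comp hV

lemma smooth_vcomp {V : Tot n → Tot n} (hV : Smooth V) (l : Fin n) :
    Smooth (fun w => (V w).2 l) := ((phiV n l).contDiff).comp hV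

lemma smooth_cfun (hΓ : ∀ i j k, Smooth fun x => Γ x i j k) (i l : Fin n) :
    Smooth (fun w : Tot n => cstar Γ w i l) := by
  unfold cstar
  apply ContDiff.sum
  intro k _
  exact ((phiV n k).contDiff).mul ((hΓ i l k).comp contDiff_fst)

lemma smooth_vcv (hΓ : ∀ i j k, Smooth fun x => Γ x i j k)
    {V : Tot n → Tot n} (hV : Smooth V) (l : Fin n) :
    Smooth (fun w => vcvstar Γ w (V w) l) := by
  unfold vcvstar
  apply ContDiff.sub (smooth_vcomp hV l)
  apply ContDiff.sum
  intro i _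
  exact (smooth_hcomp hV i).mul (smooth_cfun Γ hΓ i l)

end SmoothLemmas
section FrameAlg

variable {n : ℕ} (Γ : Pt n → Fin n → Fin n → Fin n → ℝ)

lemma vcv_add (z a b : Tot n) (l : Fin n) :
    vcvstar Γ z (a + b) l = vcvstar Γ z a l + vcvstar Γ z b l := by
  simp only [vcvstar, Prod.fst_add, Prod.snd_add, Pi.add_apply, add_mul,
    Finset.sum_add_distrib]
  ring

lemma vcv_sub (z a b : Tot n) (l : Fin n) :
    vcvstar Γ z (a - b) l = vcvstar Γ z a l - vcvstar Γ z b l := by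
  simp only [vcvstar, Prod.fst_sub, Prod.snd_sub, Pi.sub_apply, sub_mul,
    Finset.sum_sub_distrib]
  ring

lemma vcv_smul (z : Tot n) (r : ℝ) (a : Tot n) (l : Fin n) :
    vcvstar Γ z (r • a) l = r * vcvstar Γ z a l := by
  simp only [vcvstar, Prod.smul_fst, Prod.smul_snd, Pi.smul_apply, smul_eq_mul,
    mul_sub, Finset.mul_sum]
  ring_nf

lemma vcv_zero (z : Tot n) (l : Fin n) : vcvstar Γ z 0 l = 0 := by
  simp [vcvstar]

lemma vcv_sum {ι : Type*} (z : Tot n) (s : Finset ι) (f : ι → Tot n) (l : Fin n) :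
    vcvstar Γ z (∑ i ∈ s, f i) l = ∑ i ∈ s, vcvstar Γ z (f i) l := by
  classical
  induction s using Finset.induction with
  | empty => simp [vcv_zero]
  | insert _ _ hx ih =>
      rw [Finset.sum_insert hx, Finset.sum_insert hx, vcv_add, ih]

lemma hcv_add (a b : Tot n) (k : Fin n) : hcv (a + b) k = hcv a k + hcv b k := rfl

lemma hcv_sub (a b : Tot n) (k : Fin n) : hcv (a - b) k = hcv a k - hcv b k := rfl

lemma hcv_smul (r : ℝ) (a : Tot n) (k : Fin n) : hcv (r • a) k = r * hcv a k := rfl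

lemma hcv_zero (k : Fin n) : hcv (0 : Tot n) k = 0 := rfl

lemma hcv_sum {ι : Type*} (s : Finset ι) (f : ι → Tot n) (k : Fin n) :
    hcv (∑ i ∈ s, f i) k = ∑ i ∈ s, hcv (f i) k := by
  simp [hcv, Prod.fst_sum, Finset.sum_apply]

lemma vcv_XH (z : Tot n) (i l : Fin n) : vcvstar Γ z (XHstar Γ i z) l = 0 := by
  simp only [vcvstar, XHstar, Pi.single_apply, ite_mul, one_mul, zero_mul,
    Finset.sum_ite_eq', Finset.mem_univ, if_true]
  ring

lemma vcv_VV (z : Tot n) (j l : Fin n) :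
    vcvstar Γ z (VV j z) l = if l = j then 1 else 0 := by
  simp [vcvstar, VV, Pi.single_apply]

lemma hcv_XH (z : Tot n) (i k : Fin n) :
    hcv (XHstar Γ i z) k = if k = i then 1 else 0 := by
  simp [hcv, XHstar, Pi.single_apply]

lemma hcv_VV (z : Tot n) (j k : Fin n) : hcv (VV j z) k = 0 := rfl

variable (h hinv : Pt n → Fin n → Fin n → ℝ)

lemma hcv_tconn (U W : Tot n → Tot n) (z : Tot n) (k : Fin n) :
    hcv (tconnStar Γ h hinv U W z) k
      = act U (fun w => hcv (W w) k) z
        + ∑ a, ∑ b, (hcv (U z) a * hcv (W z) b) * Γ z.1 a b k := by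
  unfold tconnStar
  rw [hcv_add, hcv_add, hcv_add, hcv_sum, hcv_sum, hcv_sum, hcv_sum]
  have e1 : ∑ i, hcv (act U (fun w => hcv (W w) i) z • XHstar Γ i z) k
      = act U (fun w => hcv (W w) k) z := by
    simp [hcv_smul, hcv_XH, mul_ite, Finset.sum_ite_eq]
  have e2 : ∑ l, hcv (act U (fun w => vcvstar Γ w (W w) l) z • VV l z) k = 0 := by
    simp [hcv_smul, hcv_VV]
  have e3 : ∀ i, hcv (∑ j, (hcv (U z) i * hcv (W z) j) •
      (∑ k', Γ z.1 i j k' • XHstar Γ k' z)) k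
      = ∑ j, (hcv (U z) i * hcv (W z) j) * Γ z.1 i j k := by
    intro i
    rw [hcv_sum]
    refine Finset.sum_congr rfl fun j _ => ?_
    rw [hcv_smul, hcv_sum]
    simp [hcv_smul, hcv_XH, mul_ite, Finset.sum_ite_eq]
  have e4 : ∀ i, hcv (∑ j, (hcv (U z) i * vcvstar Γ z (W z) j) •
      (∑ r, Cstar Γ h hinv z.1 i j r • VV r z)) k = 0 := by
    intro i
    rw [hcv_sum]
    have hz : ∀ j ∈ (Finset.univ : Finset (Fin n)), hcv ((hcv (U z) i * vcvstar Γ z (W z) j) •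
        (∑ r, Cstar Γ h hinv z.1 i j r • VV r z)) k = 0 := by
      intro j _
      rw [hcv_smul, hcv_sum]
      simp [hcv_smul, hcv_VV]
    rw [Finset.sum_congr rfl hz]
    simp
  rw [e1, e2]
  rw [Finset.sum_congr rfl fun i _ => e3 i, Finset.sum_congr rfl fun i _ => e4 i]
  simp

lemma vcv_tconn (U W : Tot n → Tot n) (z : Tot n) (l : Fin n) :
    vcvstar Γ z (tconnStar Γ h hinv U W z) l
      = act U (fun w => vcvstar Γ w (W w) l) z
        + ∑ a, ∑ b, (hcv (U z) a * vcvstar Γ z (W z) b) * Cstar Γ h hinv z.1 a b l := by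
  unfold tconnStar
  rw [vcv_add, vcv_add, vcv_add, vcv_sum, vcv_sum, vcv_sum, vcv_sum]
  have e1 : ∑ i, vcvstar Γ z (act U (fun w => hcv (W w) i) z • XHstar Γ i z) l = 0 := by
    simp [vcv_smul, vcv_XH]
  have e2 : ∑ j, vcvstar Γ z (act U (fun w => vcvstar Γ w (W w) j) z • VV j z) l
      = act U (fun w => vcvstar Γ w (W w) l) z := by
    simp [vcv_smul, vcv_VV, mul_ite, Finset.sum_ite_eq]
  have e3 : ∀ i, vcvstar Γ z (∑ j, (hcv (U z) i * hcv (W z) j) •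
      (∑ k', Γ z.1 i j k' • XHstar Γ k' z)) l = 0 := by
    intro i
    rw [vcv_sum]
    have hz : ∀ j ∈ (Finset.univ : Finset (Fin n)), vcvstar Γ z ((hcv (U z) i * hcv (W z) j) •
        (∑ k', Γ z.1 i j k' • XHstar Γ k' z)) l = 0 := by
      intro j _
      rw [vcv_smul, vcv_sum]
      simp [vcv_smul, vcv_XH]
    rw [Finset.sum_congr rfl hz]
    simp
  have e4 : ∀ i, vcvstar Γ z (∑ j, (hcv (U z) i * vcvstar Γ z (W z) j) •
      (∑ r, Cstar Γ h hinv z.1 i j r • VV r z)) l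
      = ∑ j, (hcv (U z) i * vcvstar Γ z (W z) j) * Cstar Γ h hinv z.1 i j l := by
    intro i
    rw [vcv_sum]
    refine Finset.sum_congr rfl fun j _ => ?_
    rw [vcv_smul, vcv_sum]
    simp [vcv_smul, vcv_VV, mul_ite, Finset.sum_ite_eq]
  rw [e1, e2]
  rw [Finset.sum_congr rfl fun i _ => e3 i, Finset.sum_congr rfl fun i _ => e4 i]
  simp

end FrameAlg
section Deriv

variable {n : ℕ} (Γ : Pt n → Fin n → Fin n → Fin n → ℝ)

lemma act_hcv (U V : Tot n → Tot n) (z : Tot n) (hV : Smooth V) (l : Fin n) :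
    act U (fun w => hcv (V w) l) z = (fderiv ℝ V z (U z)).1 l := act_fst U V z hV l

lemma act_cstar (hΓ : ∀ i j k, Smooth fun x => Γ x i j k)
    (U : Tot n → Tot n) (z : Tot n) (a l : Fin n) :
    act U (fun w => cstar Γ w a l) z
      = ∑ k, (U z).2 k * Γ z.1 a l k
        + ∑ k, z.2 k * ∑ j, (U z).1 j * pd j (fun x => Γ x a l k) z.1 := by
  have e0 : (fun w : Tot n => cstar Γ w a l)
      = fun w : Tot n => ∑ k, w.2 k * Γ w.1 a l k := rfl
  rw [e0]
  have dk : ∀ k ∈ (Finset.univ : Finset (Fin n)),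
      DifferentiableAt ℝ (fun w : Tot n => w.2 k * Γ w.1 a l k) z := by
    intro k _
    exact Smooth.dAt (((phiV n k).contDiff).mul ((hΓ a l k).comp contDiff_fst)) z
  rw [act_sum U Finset.univ _ z dk, ← Finset.sum_add_distrib]
  refine Finset.sum_congr rfl fun k _ => ?_
  have d1 : DifferentiableAt ℝ (fun w : Tot n => w.2 k) z := Smooth.dAt ((phiV n k).contDiff) z
  have d2 : DifferentiableAt ℝ (fun w : Tot n => Γ w.1 a l k) z :=
    Smooth.dAt ((hΓ a l k).comp contDiff_fst) z
  rw [act_mul U _ _ z d1 d2, act_snd_coord, act_base U _ z (hΓ a l k)]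

lemma act_vcv (hΓ : ∀ i j k, Smooth fun x => Γ x i j k)
    (U V : Tot n → Tot n) (z : Tot n) (hV : Smooth V) (l : Fin n) :
    act U (fun w => vcvstar Γ w (V w) l) z
      = (fderiv ℝ V z (U z)).2 l
        - ∑ i, ((fderiv ℝ V z (U z)).1 i * cstar Γ z i l
            + (V z).1 i * act U (fun w => cstar Γ w i l) z) := by
  have e0 : (fun w => vcvstar Γ w (V w) l)
      = fun w => (V w).2 l - ∑ i, (V w).1 i * cstar Γ w i l := rfl
  rw [e0]
  have d1 : DifferentiableAt ℝ (fun w => (V w).2 l) z := (smooth_vcomp hV l).dAt z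
  have dterm : ∀ i ∈ (Finset.univ : Finset (Fin n)),
      DifferentiableAt ℝ (fun w => (V w).1 i * cstar Γ w i l) z := by
    intro i _
    exact Smooth.dAt ((smooth_hcomp hV i).mul (smooth_cfun Γ hΓ i l)) z
  have d2 : DifferentiableAt ℝ (fun w => ∑ i, (V w).1 i * cstar Γ w i l) z :=
    DifferentiableAt.fun_sum dterm
  rw [act_sub U _ _ z d1 d2, act_snd U V z hV l, act_sum U Finset.univ _ z dterm]
  congr 1
  refine Finset.sum_congr rfl fun i _ => ?_
  rw [act_mul U _ _ z ((smooth_hcomp hV i).dAt z) ((smooth_cfun Γ hΓ i l).dAt z),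
    act_fst U V z hV i]

lemma hcv_lie (U V : Tot n → Tot n) (z : Tot n) (hU : Smooth U) (hV : Smooth V) (k : Fin n) :
    hcv (lie U V z) k
      = act U (fun w => hcv (V w) k) z - act V (fun w => hcv (U w) k) z := by
  rw [act_hcv U V z hV k, act_hcv V U z hU k]
  rfl

lemma vcv_lie (hΓ : ∀ i j k, Smooth fun x => Γ x i j k)
    (U V : Tot n → Tot n) (z : Tot n) (hU : Smooth U) (hV : Smooth V) (l : Fin n) :
    vcvstar Γ z (lie U V z) l
      = (act U (fun w => vcvstar Γ w (V w) l) z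
          + ∑ i, hcv (V z) i * act U (fun w => cstar Γ w i l) z)
        - (act V (fun w => vcvstar Γ w (U w) l) z
          + ∑ i, hcv (U z) i * act V (fun w => cstar Γ w i l) z) := by
  rw [act_vcv Γ hΓ U V z hV l, act_vcv Γ hΓ V U z hU l]
  have e0 : vcvstar Γ z (lie U V z) l
      = ((fderiv ℝ V z (U z)).2 l - (fderiv ℝ U z (V z)).2 l)
        - ∑ i, ((fderiv ℝ V z (U z)).1 i - (fderiv ℝ U z (V z)).1 i) * cstar Γ z i l := rfl
  rw [e0]
  simp only [Finset.sum_add_distrib, Finset.sum_sub_distrib, sub_mul, hcv]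
  ring

lemma act_pw (ε : ℝ) (hΓ : ∀ i j k, Smooth fun x => Γ x i j k)
    (U V W : Tot n → Tot n) (z : Tot n) (hV : Smooth V) (hW : Smooth W) :
    act U (pwStar Γ ε V W) z
      = ((∑ i, act U (fun w => vcvstar Γ w (V w) i) z * hcv (W z) i)
          + ∑ i, vcvstar Γ z (V z) i * act U (fun w => hcv (W w) i) z)
        + (ε * ∑ i, act U (fun w => hcv (V w) i) z * vcvstar Γ z (W z) i
          + ε * ∑ i, hcv (V z) i * act U (fun w => vcvstar Γ w (W w) i) z) := by
  have e0 : pwStar Γ ε V W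
      = fun w => (∑ i, vcvstar Γ w (V w) i * hcv (W w) i)
          + ε * ∑ i, hcv (V w) i * vcvstar Γ w (W w) i := rfl
  rw [e0]
  have dt1 : ∀ i ∈ (Finset.univ : Finset (Fin n)),
      DifferentiableAt ℝ (fun w => vcvstar Γ w (V w) i * hcv (W w) i) z := by
    intro i _
    exact Smooth.dAt ((smooth_vcv Γ hΓ hV i).mul (smooth_hcomp hW i)) z
  have dt2 : ∀ i ∈ (Finset.univ : Finset (Fin n)),
      DifferentiableAt ℝ (fun w => hcv (V w) i * vcvstar Γ w (W w) i) z := by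
    intro i _
    exact Smooth.dAt ((smooth_hcomp hV i).mul (smooth_vcv Γ hΓ hW i)) z
  have d1 : DifferentiableAt ℝ (fun w => ∑ i, vcvstar Γ w (V w) i * hcv (W w) i) z :=
    DifferentiableAt.fun_sum dt1
  have d2 : DifferentiableAt ℝ
      (fun w => ε * ∑ i, hcv (V w) i * vcvstar Γ w (W w) i) z :=
    (DifferentiableAt.fun_sum dt2).const_mul ε
  rw [act_add U _ _ z d1 d2, act_sum U Finset.univ _ z dt1,
    act_const_mul U _ ε z (DifferentiableAt.fun_sum dt2), act_sum U Finset.univ _ z dt2]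
  have e1 : ∀ i ∈ (Finset.univ : Finset (Fin n)),
      act U (fun w => vcvstar Γ w (V w) i * hcv (W w) i) z
        = act U (fun w => vcvstar Γ w (V w) i) z * hcv (W z) i
          + vcvstar Γ z (V z) i * act U (fun w => hcv (W w) i) z := by
    intro i _
    exact act_mul U _ _ z ((smooth_vcv Γ hΓ hV i).dAt z) ((smooth_hcomp hW i).dAt z)
  have e2 : ∀ i ∈ (Finset.univ : Finset (Fin n)),
      act U (fun w => hcv (V w) i * vcvstar Γ w (W w) i) z
        = act U (fun w => hcv (V w) i) z * vcvstar Γ z (W z) i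
          + hcv (V z) i * act U (fun w => vcvstar Γ w (W w) i) z := by
    intro i _
    exact act_mul U _ _ z ((smooth_hcomp hV i).dAt z) ((smooth_vcv Γ hΓ hW i).dAt z)
  rw [Finset.sum_congr rfl e1, Finset.sum_congr rfl e2, Finset.sum_add_distrib,
    Finset.sum_add_distrib, mul_add]

end Deriv
section CstarSymm

variable {n : ℕ} (Γ : Pt n → Fin n → Fin n → Fin n → ℝ) (h hinv : Pt n → Fin n → Fin n → ℝ)

lemma qs_ident (hqs : ∀ x i j k, dnabla Γ h x i j k = 0) (x : Pt n) (i j k : Fin n) :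
    pd i (fun x' => h x' j k) x - pd j (fun x' => h x' i k) x
      = ∑ l, Γ x i k l * h x j l - ∑ l, Γ x j k l * h x i l := by
  have H := hqs x i j k
  unfold dnabla covh at H
  have split : ∑ l, (Γ x i j l - Γ x j i l) * h x l k
      = ∑ l, Γ x i j l * h x l k - ∑ l, Γ x j i l * h x l k := by
    rw [← Finset.sum_sub_distrib]
    exact Finset.sum_congr rfl fun l _ => by ring
  rw [split] at H
  linarith [H]

lemma inv_deriv (hsmoothh : ∀ i j, Smooth fun x => h x i j)
    (hsmoothhinv : ∀ i j, Smooth fun x => hinv x i j)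
    (hleft : ∀ x i j, ∑ k, hinv x i k * h x k j = if i = j then (1 : ℝ) else 0)
    (x : Pt n) (i j b : Fin n) :
    ∑ k, pd i (fun x' => hinv x' j k) x * h x k b
      = - ∑ k, hinv x j k * pd i (fun x' => h x' k b) x := by
  have e0 : pd i (fun x' => ∑ k, hinv x' j k * h x' k b) x = 0 := by
    have e1 : (fun x' : Pt n => ∑ k, hinv x' j k * h x' k b)
        = fun _ => if j = b then (1 : ℝ) else 0 := funext fun x' => hleft x' j b
    rw [e1, pd_const]
  have e2 : pd i (fun x' => ∑ k, hinv x' j k * h x' k b) x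
      = ∑ k, (pd i (fun x' => hinv x' j k) x * h x k b
          + hinv x j k * pd i (fun x' => h x' k b) x) := by
    rw [pd_sum Finset.univ _ i x
      (fun k _ => Smooth.dAt ((hsmoothhinv j k).mul (hsmoothh k b)) x)]
    exact Finset.sum_congr rfl fun k _ =>
      pd_mul _ _ i x (Smooth.dAt (hsmoothhinv j k) x) (Smooth.dAt (hsmoothh k b) x)
  rw [e2, Finset.sum_add_distrib] at e0
  linarith [e0]

lemma pd_sym (σ : ℝ) (hs : ∀ x a b, h x a b = σ * h x b a)
    (hsmoothh : ∀ i j, Smooth fun x => h x i j) (i a r : Fin n) (x : Pt n) :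
    pd i (fun x' => h x' a r) x = σ * pd i (fun x' => h x' r a) x := by
  have e : (fun x' => h x' a r) = fun x' => σ * h x' r a := funext fun x' => hs x' a r
  rw [e, pd_const_mul _ σ i x (Smooth.dAt (hsmoothh r a) x)]

lemma cstar_formula (σ : ℝ) (hs : ∀ x a b, h x a b = σ * h x b a)
    (hsmoothh : ∀ i j, Smooth fun x => h x i j)
    (hsmoothhinv : ∀ i j, Smooth fun x => hinv x i j)
    (hleft : ∀ x i j, ∑ k, hinv x i k * h x k j = if i = j then (1 : ℝ) else 0)
    (x : Pt n) (i j r : Fin n) :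
    Cstar Γ h hinv x i j r
      = σ * ∑ a, hinv x j a *
          (∑ k, Γ x i a k * h x k r - pd i (fun x' => h x' a r) x) := by
  have lhs_eq : Cstar Γ h hinv x i j r
      = σ * ((∑ k, pd i (fun x' => hinv x' j k) x * h x k r)
          + ∑ k, ∑ l, hinv x j l * Γ x i l k * h x k r) := by
    unfold Cstar
    have step : ∀ k ∈ (Finset.univ : Finset (Fin n)),
        (pd i (fun x' => hinv x' j k) x + ∑ l, hinv x j l * Γ x i l k) * h x r k
          = σ * (pd i (fun x' => hinv x' j k) x * h x k r
              + ∑ l, hinv x j l * Γ x i l k * h x k r) := by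
      intro k _
      rw [hs x r k, ← Finset.sum_mul]
      ring
    rw [Finset.sum_congr rfl step, ← Finset.mul_sum, Finset.sum_add_distrib]
  rw [lhs_eq, inv_deriv h hinv hsmoothh hsmoothhinv hleft x i j r]
  have swap : ∑ k, ∑ l, hinv x j l * Γ x i l k * h x k r
      = ∑ l, ∑ k, hinv x j l * Γ x i l k * h x k r := Finset.sum_comm
  have rhs_eq : ∑ a, hinv x j a *
        (∑ k, Γ x i a k * h x k r - pd i (fun x' => h x' a r) x)
      = (∑ a, ∑ k, hinv x j a * Γ x i a k * h x k r)
        - ∑ a, hinv x j a * pd i (fun x' => h x' a r) x := by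
    rw [← Finset.sum_sub_distrib]
    refine Finset.sum_congr rfl fun a _ => ?_
    rw [mul_sub, Finset.mul_sum]
    congr 1
    exact Finset.sum_congr rfl fun k _ => by ring
  rw [swap, rhs_eq]
  ring

lemma cstar_symm (σ : ℝ) (hs : ∀ x a b, h x a b = σ * h x b a)
    (hsmoothh : ∀ i j, Smooth fun x => h x i j)
    (hsmoothhinv : ∀ i j, Smooth fun x => hinv x i j)
    (hleft : ∀ x i j, ∑ k, hinv x i k * h x k j = if i = j then (1 : ℝ) else 0)
    (hqs : ∀ x i j k, dnabla Γ h x i j k = 0)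
    (x : Pt n) (i j r : Fin n) :
    Cstar Γ h hinv x i j r = Cstar Γ h hinv x r j i := by
  rw [cstar_formula Γ h hinv σ hs hsmoothh hsmoothhinv hleft x i j r,
    cstar_formula Γ h hinv σ hs hsmoothh hsmoothhinv hleft x r j i]
  congr 1
  refine Finset.sum_congr rfl fun a _ => ?_
  congr 1
  have h2 := qs_ident Γ h hqs x i r a
  have p1 := pd_sym h σ hs hsmoothh i a r x
  have p2 := pd_sym h σ hs hsmoothh r a i x
  have s1 : ∑ k, Γ x i a k * h x k r = σ * ∑ k, Γ x i a k * h x r k := by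
    rw [Finset.mul_sum]
    exact Finset.sum_congr rfl fun k _ => by rw [hs x k r]; ring
  have s2 : ∑ k, Γ x r a k * h x k i = σ * ∑ k, Γ x r a k * h x i k := by
    rw [Finset.mul_sum]
    exact Finset.sum_congr rfl fun k _ => by rw [hs x k i]; ring
  rw [p1, p2, s1, s2]
  linear_combination (-σ) * h2

end CstarSymm
section Alg

variable {n : ℕ} (Γ : Pt n → Fin n → Fin n → Fin n → ℝ) (h hinv : Pt n → Fin n → Fin n → ℝ)

lemma sum_comm3 (A : Fin n → Fin n → Fin n → ℝ) :
    ∑ i, ∑ a, ∑ b, A i a b = ∑ b, ∑ i, ∑ a, A i a b := by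
  calc ∑ i, ∑ a, ∑ b, A i a b
      = ∑ i, ∑ b, ∑ a, A i a b := Finset.sum_congr rfl fun i _ => Finset.sum_comm
    _ = ∑ b, ∑ i, ∑ a, A i a b := Finset.sum_comm

lemma swap_aj (A : Fin n → Fin n → Fin n → ℝ) :
    ∑ a, ∑ k, ∑ j, A a k j = ∑ a, ∑ k, ∑ j, A j k a := by
  calc ∑ a, ∑ k, ∑ j, A a k j
      = ∑ a, ∑ j, ∑ k, A a k j := Finset.sum_congr rfl fun a _ => Finset.sum_comm
    _ = ∑ j, ∑ a, ∑ k, A a k j := Finset.sum_comm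
    _ = ∑ j, ∑ k, ∑ a, A a k j := Finset.sum_congr rfl fun j _ => Finset.sum_comm

lemma reorder4a (A : Fin n → Fin n → Fin n → Fin n → ℝ) :
    ∑ i, ∑ a, ∑ m, ∑ k, A i a m k = ∑ a, ∑ k, ∑ m, ∑ i, A i a m k := by
  calc ∑ i, ∑ a, ∑ m, ∑ k, A i a m k
      = ∑ a, ∑ i, ∑ m, ∑ k, A i a m k := Finset.sum_comm
    _ = ∑ a, ∑ i, ∑ k, ∑ m, A i a m k :=
        Finset.sum_congr rfl fun a _ => Finset.sum_congr rfl fun i _ => Finset.sum_comm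
    _ = ∑ a, ∑ k, ∑ i, ∑ m, A i a m k := Finset.sum_congr rfl fun a _ => Finset.sum_comm
    _ = ∑ a, ∑ k, ∑ m, ∑ i, A i a m k :=
        Finset.sum_congr rfl fun a _ => Finset.sum_congr rfl fun k _ => Finset.sum_comm

lemma reorder4b (A : Fin n → Fin n → Fin n → Fin n → ℝ) :
    ∑ i, ∑ a, ∑ m, ∑ k, A i a m k = ∑ m, ∑ k, ∑ a, ∑ i, A i a m k := by
  calc ∑ i, ∑ a, ∑ m, ∑ k, A i a m k
      = ∑ a, ∑ i, ∑ m, ∑ k, A i a m k := Finset.sum_comm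
    _ = ∑ a, ∑ m, ∑ i, ∑ k, A i a m k :=
        Finset.sum_congr rfl fun a _ => Finset.sum_comm
    _ = ∑ m, ∑ a, ∑ i, ∑ k, A i a m k := Finset.sum_comm
    _ = ∑ m, ∑ a, ∑ k, ∑ i, A i a m k :=
        Finset.sum_congr rfl fun m _ => Finset.sum_congr rfl fun a _ => Finset.sum_comm
    _ = ∑ m, ∑ k, ∑ a, ∑ i, A i a m k := Finset.sum_congr rfl fun m _ => Finset.sum_comm

lemma algA (z u v w : Tot n)
    (hC : ∀ i j r, Cstar Γ h hinv z.1 i j r = Cstar Γ h hinv z.1 r j i) :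
    ∑ i, hcv v i * (∑ a, ∑ b, (hcv u a * vcvstar Γ z w b) * Cstar Γ h hinv z.1 a b i)
      = ∑ i, hcv u i * (∑ a, ∑ b, (hcv v a * vcvstar Γ z w b) * Cstar Γ h hinv z.1 a b i) := by
  have flat : ∀ (p q : Tot n),
      ∑ i, hcv p i * (∑ a, ∑ b, (hcv q a * vcvstar Γ z w b) * Cstar Γ h hinv z.1 a b i)
        = ∑ i, ∑ a, ∑ b, hcv p i * hcv q a * vcvstar Γ z w b * Cstar Γ h hinv z.1 a b i := by
    intro p q
    refine Finset.sum_congr rfl fun i _ => ?_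
    rw [Finset.mul_sum]
    refine Finset.sum_congr rfl fun a _ => ?_
    rw [Finset.mul_sum]
    exact Finset.sum_congr rfl fun b _ => by ring
  rw [flat v u, flat u v]
  rw [Finset.sum_comm]
  refine Finset.sum_congr rfl fun i _ => Finset.sum_congr rfl fun a _ =>
    Finset.sum_congr rfl fun b _ => ?_
  rw [hC a b i]
  ring

end Alg
section AlgB

variable {n : ℕ} (Γ : Pt n → Fin n → Fin n → Fin n → ℝ)

lemma mul_sum_mul (c d : ℝ) (f : Fin n → ℝ) :
    (c * ∑ k, f k) * d = ∑ k, c * d * f k := by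
  rw [show (c * ∑ k, f k) * d = (c * d) * ∑ k, f k by ring, Finset.mul_sum]

lemma algB (hflat : ∀ x i j k l, curv Γ x i j k l = 0) (z u v w : Tot n) :
    (∑ i, (∑ a, hcv u a * (∑ k, v.2 k * Γ z.1 a i k
        + ∑ k, z.2 k * ∑ j, v.1 j * pd j (fun x => Γ x a i k) z.1)) * hcv w i)
      - ∑ i, (∑ a, hcv v a * (∑ k, u.2 k * Γ z.1 a i k
        + ∑ k, z.2 k * ∑ j, u.1 j * pd j (fun x => Γ x a i k) z.1)) * hcv w i
      = (∑ i, vcvstar Γ z v i * (∑ a, ∑ b, (hcv u a * hcv w b) * Γ z.1 a b i))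
        - ∑ i, vcvstar Γ z u i * (∑ a, ∑ b, (hcv v a * hcv w b) * Γ z.1 a b i) := by
  have re1 : ∀ (p q : Tot n),
      ∑ i, vcvstar Γ z p i * (∑ a, ∑ b, (hcv q a * hcv w b) * Γ z.1 a b i)
        = ∑ b, (∑ i, ∑ a, (vcvstar Γ z p i * hcv q a) * Γ z.1 a b i) * hcv w b := by
    intro p q
    calc ∑ i, vcvstar Γ z p i * (∑ a, ∑ b, (hcv q a * hcv w b) * Γ z.1 a b i)
        = ∑ i, ∑ a, ∑ b, (vcvstar Γ z p i * hcv q a) * Γ z.1 a b i * hcv w b := by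
          refine Finset.sum_congr rfl fun i _ => ?_
          rw [Finset.mul_sum]
          refine Finset.sum_congr rfl fun a _ => ?_
          rw [Finset.mul_sum]
          exact Finset.sum_congr rfl fun b _ => by ring
      _ = ∑ b, ∑ i, ∑ a, (vcvstar Γ z p i * hcv q a) * Γ z.1 a b i * hcv w b :=
          sum_comm3 _
      _ = ∑ b, (∑ i, ∑ a, (vcvstar Γ z p i * hcv q a) * Γ z.1 a b i) * hcv w b := by
          refine Finset.sum_congr rfl fun b _ => ?_
          rw [Finset.sum_mul]
          exact Finset.sum_congr rfl fun i _ => by rw [Finset.sum_mul]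
  rw [re1 v u, re1 u v, ← Finset.sum_sub_distrib, ← Finset.sum_sub_distrib]
  refine Finset.sum_congr rfl fun l _ => ?_
  rw [← sub_mul, ← sub_mul]
  congr 1
  have pdswap : ∀ a j k, pd j (fun x => Γ x a l k) z.1
      = pd a (fun x => Γ x j l k) z.1
        + (∑ r, Γ z.1 j l r * Γ z.1 a r k - ∑ r, Γ z.1 a l r * Γ z.1 j r k) := by
    intro a j k
    have H := hflat z.1 a j l k
    unfold curv at H
    linarith
  have lsplit : ∀ (p q : Tot n),
      ∑ a, hcv p a * (∑ k, q.2 k * Γ z.1 a l k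
          + ∑ k, z.2 k * ∑ j, q.1 j * pd j (fun x => Γ x a l k) z.1)
        = (∑ a, ∑ k, (q.2 k * hcv p a) * Γ z.1 a l k)
          + ∑ a, ∑ k, ∑ j, (hcv p a * q.1 j) * (z.2 k * pd j (fun x => Γ x a l k) z.1) := by
    intro p q
    rw [← Finset.sum_add_distrib]
    refine Finset.sum_congr rfl fun a _ => ?_
    rw [mul_add]
    congr 1
    · rw [Finset.mul_sum]
      exact Finset.sum_congr rfl fun k _ => by ring
    · rw [Finset.mul_sum]
      refine Finset.sum_congr rfl fun k _ => ?_
      rw [Finset.mul_sum, Finset.mul_sum]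
      exact Finset.sum_congr rfl fun j _ => by ring
  rw [lsplit u v, lsplit v u]
  have rsplit : (∑ i, ∑ a, (vcvstar Γ z v i * hcv u a) * Γ z.1 a l i)
      - ∑ i, ∑ a, (vcvstar Γ z u i * hcv v a) * Γ z.1 a l i
      = ((∑ i, ∑ a, (v.2 i * hcv u a) * Γ z.1 a l i)
          - ∑ i, ∑ a, ∑ m, ∑ k, (v.1 m * hcv u a) * (z.2 k * (Γ z.1 m i k * Γ z.1 a l i)))
        - ((∑ i, ∑ a, (u.2 i * hcv v a) * Γ z.1 a l i)
          - ∑ i, ∑ a, ∑ m, ∑ k, (u.1 m * hcv v a) * (z.2 k * (Γ z.1 m i k * Γ z.1 a l i))) := by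
    have perterm : ∀ i a, (vcvstar Γ z v i * hcv u a) * Γ z.1 a l i
        - (vcvstar Γ z u i * hcv v a) * Γ z.1 a l i
        = ((v.2 i * hcv u a) * Γ z.1 a l i
            - ∑ m, ∑ k, (v.1 m * hcv u a) * (z.2 k * (Γ z.1 m i k * Γ z.1 a l i)))
          - ((u.2 i * hcv v a) * Γ z.1 a l i
            - ∑ m, ∑ k, (u.1 m * hcv v a) * (z.2 k * (Γ z.1 m i k * Γ z.1 a l i))) := by
      intro i a
      simp only [vcvstar, cstar]
      have ev : ∀ (p q : Tot n),
          (∑ m, p.1 m * ∑ k, z.2 k * Γ z.1 m i k) * (hcv q a * Γ z.1 a l i)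
            = ∑ m, ∑ k, (p.1 m * hcv q a) * (z.2 k * (Γ z.1 m i k * Γ z.1 a l i)) := by
        intro p q
        rw [Finset.sum_mul]
        refine Finset.sum_congr rfl fun m _ => ?_
        rw [mul_sum_mul]
        exact Finset.sum_congr rfl fun k _ => by ring
      linear_combination (ev u v) - (ev v u)
    calc (∑ i, ∑ a, (vcvstar Γ z v i * hcv u a) * Γ z.1 a l i)
          - ∑ i, ∑ a, (vcvstar Γ z u i * hcv v a) * Γ z.1 a l i
        = ∑ i, ∑ a, ((vcvstar Γ z v i * hcv u a) * Γ z.1 a l i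
            - (vcvstar Γ z u i * hcv v a) * Γ z.1 a l i) := by
          rw [← Finset.sum_sub_distrib]
          exact Finset.sum_congr rfl fun i _ => (Finset.sum_sub_distrib _ _).symm
      _ = ∑ i, ∑ a, (((v.2 i * hcv u a) * Γ z.1 a l i
            - ∑ m, ∑ k, (v.1 m * hcv u a) * (z.2 k * (Γ z.1 m i k * Γ z.1 a l i)))
          - ((u.2 i * hcv v a) * Γ z.1 a l i
            - ∑ m, ∑ k, (u.1 m * hcv v a) * (z.2 k * (Γ z.1 m i k * Γ z.1 a l i)))) :=
          Finset.sum_congr rfl fun i _ => Finset.sum_congr rfl fun a _ => perterm i a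
      _ = _ := by simp only [Finset.sum_sub_distrib]
  rw [rsplit]
  have cl1 : ∑ a, ∑ k, (v.2 k * hcv u a) * Γ z.1 a l k
      = ∑ i, ∑ a, (v.2 i * hcv u a) * Γ z.1 a l i := Finset.sum_comm
  have cl2 : ∑ a, ∑ k, (u.2 k * hcv v a) * Γ z.1 a l k
      = ∑ i, ∑ a, (u.2 i * hcv v a) * Γ z.1 a l i := Finset.sum_comm
  have cl3 : (∑ a, ∑ k, ∑ j, (hcv u a * v.1 j) * (z.2 k * pd j (fun x => Γ x a l k) z.1))
      - ∑ a, ∑ k, ∑ j, (hcv v a * u.1 j) * (z.2 k * pd j (fun x => Γ x a l k) z.1)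
      = (∑ i, ∑ a, ∑ m, ∑ k, (u.1 m * hcv v a) * (z.2 k * (Γ z.1 m i k * Γ z.1 a l i)))
        - ∑ i, ∑ a, ∑ m, ∑ k, (v.1 m * hcv u a) * (z.2 k * (Γ z.1 m i k * Γ z.1 a l i)) := by
    have sw := swap_aj (fun a k j => (hcv v a * u.1 j) * (z.2 k * pd j (fun x => Γ x a l k) z.1))
    rw [sw]
    have merge : (∑ a, ∑ k, ∑ j, (hcv u a * v.1 j) * (z.2 k * pd j (fun x => Γ x a l k) z.1))
        - ∑ a, ∑ k, ∑ j, (hcv v j * u.1 a) * (z.2 k * pd a (fun x => Γ x j l k) z.1)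
        = (∑ a, ∑ k, ∑ j, ∑ r, (u.1 a * v.1 j) * (z.2 k * (Γ z.1 j l r * Γ z.1 a r k)))
          - ∑ a, ∑ k, ∑ j, ∑ r, (u.1 a * v.1 j) * (z.2 k * (Γ z.1 a l r * Γ z.1 j r k)) := by
      rw [← Finset.sum_sub_distrib, ← Finset.sum_sub_distrib]
      refine Finset.sum_congr rfl fun a _ => ?_
      rw [← Finset.sum_sub_distrib, ← Finset.sum_sub_distrib]
      refine Finset.sum_congr rfl fun k _ => ?_
      rw [← Finset.sum_sub_distrib, ← Finset.sum_sub_distrib]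
      refine Finset.sum_congr rfl fun j _ => ?_
      have p1 : ∑ r, (u.1 a * v.1 j) * (z.2 k * (Γ z.1 j l r * Γ z.1 a r k))
          = (u.1 a * v.1 j) * (z.2 k * ∑ r, Γ z.1 j l r * Γ z.1 a r k) := by
        rw [Finset.mul_sum, Finset.mul_sum]
      have p2 : ∑ r, (u.1 a * v.1 j) * (z.2 k * (Γ z.1 a l r * Γ z.1 j r k))
          = (u.1 a * v.1 j) * (z.2 k * ∑ r, Γ z.1 a l r * Γ z.1 j r k) := by
        rw [Finset.mul_sum, Finset.mul_sum]
      rw [pdswap a j k, p1, p2]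
      simp only [hcv]
      ring
    rw [merge]
    have x1 : ∑ i, ∑ a, ∑ m, ∑ k, (u.1 m * hcv v a) * (z.2 k * (Γ z.1 m i k * Γ z.1 a l i))
        = ∑ a, ∑ k, ∑ j, ∑ r, (u.1 a * v.1 j) * (z.2 k * (Γ z.1 j l r * Γ z.1 a r k)) := by
      rw [reorder4b]
      refine Finset.sum_congr rfl fun a _ => Finset.sum_congr rfl fun k _ =>
        Finset.sum_congr rfl fun j _ => Finset.sum_congr rfl fun r _ => ?_
      simp only [hcv]
      ring
    have x2 : ∑ i, ∑ a, ∑ m, ∑ k, (v.1 m * hcv u a) * (z.2 k * (Γ z.1 m i k * Γ z.1 a l i))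
        = ∑ a, ∑ k, ∑ j, ∑ r, (u.1 a * v.1 j) * (z.2 k * (Γ z.1 a l r * Γ z.1 j r k)) := by
      rw [reorder4a]
      refine Finset.sum_congr rfl fun a _ => Finset.sum_congr rfl fun k _ =>
        Finset.sum_congr rfl fun j _ => Finset.sum_congr rfl fun r _ => ?_
      simp only [hcv]
      ring
    rw [x1, x2]
  linear_combination cl1 - cl2 + cl3

end AlgB
section Key

variable {n : ℕ} (Γ : Pt n → Fin n → Fin n → Fin n → ℝ) (h hinv : Pt n → Fin n → Fin n → ℝ)

lemma key (ε : ℝ)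
    (hΓ : ∀ i j k, Smooth fun x => Γ x i j k)
    (hC : ∀ x i j r, Cstar Γ h hinv x i j r = Cstar Γ h hinv x r j i)
    (hflat : ∀ x i j k l, curv Γ x i j k l = 0)
    (U V W : Tot n → Tot n) (hU : Smooth U) (hV : Smooth V) (hW : Smooth W) (z : Tot n) :
    dTensor (tconnStar Γ h hinv) (pwStar Γ ε) U V W z = 0 := by
  have eA1 := act_pw Γ ε hΓ U V W z hV hW
  have eB1 := act_pw Γ ε hΓ V U W z hU hW
  have eA2 : pwStar Γ ε (fun w => tconnStar Γ h hinv U V w) W z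
      = ((∑ i, act U (fun w => vcvstar Γ w (V w) i) z * hcv (W z) i)
          + ∑ i, (∑ a, ∑ b, (hcv (U z) a * vcvstar Γ z (V z) b) * Cstar Γ h hinv z.1 a b i)
              * hcv (W z) i)
        + (ε * ∑ i, act U (fun w => hcv (V w) i) z * vcvstar Γ z (W z) i
          + ε * ∑ i, (∑ a, ∑ b, (hcv (U z) a * hcv (V z) b) * Γ z.1 a b i)
              * vcvstar Γ z (W z) i) := by
    have c1 : ∀ i ∈ (Finset.univ : Finset (Fin n)),
        vcvstar Γ z (tconnStar Γ h hinv U V z) i * hcv (W z) i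
          = act U (fun w => vcvstar Γ w (V w) i) z * hcv (W z) i
            + (∑ a, ∑ b, (hcv (U z) a * vcvstar Γ z (V z) b) * Cstar Γ h hinv z.1 a b i)
                * hcv (W z) i := by
      intro i _
      rw [vcv_tconn Γ h hinv U V z i, add_mul]
    have c2 : ∀ i ∈ (Finset.univ : Finset (Fin n)),
        hcv (tconnStar Γ h hinv U V z) i * vcvstar Γ z (W z) i
          = act U (fun w => hcv (V w) i) z * vcvstar Γ z (W z) i
            + (∑ a, ∑ b, (hcv (U z) a * hcv (V z) b) * Γ z.1 a b i)
                * vcvstar Γ z (W z) i := by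
      intro i _
      rw [hcv_tconn Γ h hinv U V z i, add_mul]
    calc pwStar Γ ε (fun w => tconnStar Γ h hinv U V w) W z
        = (∑ i, vcvstar Γ z (tconnStar Γ h hinv U V z) i * hcv (W z) i)
          + ε * ∑ i, hcv (tconnStar Γ h hinv U V z) i * vcvstar Γ z (W z) i := rfl
      _ = _ := by
          rw [Finset.sum_congr rfl c1, Finset.sum_congr rfl c2, Finset.sum_add_distrib,
            Finset.sum_add_distrib, mul_add]
  have eB2 : pwStar Γ ε (fun w => tconnStar Γ h hinv V U w) W z
      = ((∑ i, act V (fun w => vcvstar Γ w (U w) i) z * hcv (W z) i)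
          + ∑ i, (∑ a, ∑ b, (hcv (V z) a * vcvstar Γ z (U z) b) * Cstar Γ h hinv z.1 a b i)
              * hcv (W z) i)
        + (ε * ∑ i, act V (fun w => hcv (U w) i) z * vcvstar Γ z (W z) i
          + ε * ∑ i, (∑ a, ∑ b, (hcv (V z) a * hcv (U z) b) * Γ z.1 a b i)
              * vcvstar Γ z (W z) i) := by
    have c1 : ∀ i ∈ (Finset.univ : Finset (Fin n)),
        vcvstar Γ z (tconnStar Γ h hinv V U z) i * hcv (W z) i
          = act V (fun w => vcvstar Γ w (U w) i) z * hcv (W z) i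
            + (∑ a, ∑ b, (hcv (V z) a * vcvstar Γ z (U z) b) * Cstar Γ h hinv z.1 a b i)
                * hcv (W z) i := by
      intro i _
      rw [vcv_tconn Γ h hinv V U z i, add_mul]
    have c2 : ∀ i ∈ (Finset.univ : Finset (Fin n)),
        hcv (tconnStar Γ h hinv V U z) i * vcvstar Γ z (W z) i
          = act V (fun w => hcv (U w) i) z * vcvstar Γ z (W z) i
            + (∑ a, ∑ b, (hcv (V z) a * hcv (U z) b) * Γ z.1 a b i)
                * vcvstar Γ z (W z) i := by
      intro i _
      rw [hcv_tconn Γ h hinv V U z i, add_mul]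
    calc pwStar Γ ε (fun w => tconnStar Γ h hinv V U w) W z
        = (∑ i, vcvstar Γ z (tconnStar Γ h hinv V U z) i * hcv (W z) i)
          + ε * ∑ i, hcv (tconnStar Γ h hinv V U z) i * vcvstar Γ z (W z) i := rfl
      _ = _ := by
          rw [Finset.sum_congr rfl c1, Finset.sum_congr rfl c2, Finset.sum_add_distrib,
            Finset.sum_add_distrib, mul_add]
  have eA3 : pwStar Γ ε V (fun w => tconnStar Γ h hinv U W w) z
      = ((∑ i, vcvstar Γ z (V z) i * act U (fun w => hcv (W w) i) z)
          + ∑ i, vcvstar Γ z (V z) i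
              * (∑ a, ∑ b, (hcv (U z) a * hcv (W z) b) * Γ z.1 a b i))
        + (ε * ∑ i, hcv (V z) i * act U (fun w => vcvstar Γ w (W w) i) z
          + ε * ∑ i, hcv (V z) i
              * (∑ a, ∑ b, (hcv (U z) a * vcvstar Γ z (W z) b) * Cstar Γ h hinv z.1 a b i)) := by
    have c1 : ∀ i ∈ (Finset.univ : Finset (Fin n)),
        vcvstar Γ z (V z) i * hcv (tconnStar Γ h hinv U W z) i
          = vcvstar Γ z (V z) i * act U (fun w => hcv (W w) i) z
            + vcvstar Γ z (V z) i
                * (∑ a, ∑ b, (hcv (U z) a * hcv (W z) b) * Γ z.1 a b i) := by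
      intro i _
      rw [hcv_tconn Γ h hinv U W z i, mul_add]
    have c2 : ∀ i ∈ (Finset.univ : Finset (Fin n)),
        hcv (V z) i * vcvstar Γ z (tconnStar Γ h hinv U W z) i
          = hcv (V z) i * act U (fun w => vcvstar Γ w (W w) i) z
            + hcv (V z) i
                * (∑ a, ∑ b, (hcv (U z) a * vcvstar Γ z (W z) b) * Cstar Γ h hinv z.1 a b i) := by
      intro i _
      rw [vcv_tconn Γ h hinv U W z i, mul_add]
    calc pwStar Γ ε V (fun w => tconnStar Γ h hinv U W w) z
        = (∑ i, vcvstar Γ z (V z) i * hcv (tconnStar Γ h hinv U W z) i)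
          + ε * ∑ i, hcv (V z) i * vcvstar Γ z (tconnStar Γ h hinv U W z) i := rfl
      _ = _ := by
          rw [Finset.sum_congr rfl c1, Finset.sum_congr rfl c2, Finset.sum_add_distrib,
            Finset.sum_add_distrib, mul_add]
  have eB3 : pwStar Γ ε U (fun w => tconnStar Γ h hinv V W w) z
      = ((∑ i, vcvstar Γ z (U z) i * act V (fun w => hcv (W w) i) z)
          + ∑ i, vcvstar Γ z (U z) i
              * (∑ a, ∑ b, (hcv (V z) a * hcv (W z) b) * Γ z.1 a b i))
        + (ε * ∑ i, hcv (U z) i * act V (fun w => vcvstar Γ w (W w) i) z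
          + ε * ∑ i, hcv (U z) i
              * (∑ a, ∑ b, (hcv (V z) a * vcvstar Γ z (W z) b) * Cstar Γ h hinv z.1 a b i)) := by
    have c1 : ∀ i ∈ (Finset.univ : Finset (Fin n)),
        vcvstar Γ z (U z) i * hcv (tconnStar Γ h hinv V W z) i
          = vcvstar Γ z (U z) i * act V (fun w => hcv (W w) i) z
            + vcvstar Γ z (U z) i
                * (∑ a, ∑ b, (hcv (V z) a * hcv (W z) b) * Γ z.1 a b i) := by
      intro i _
      rw [hcv_tconn Γ h hinv V W z i, mul_add]
    have c2 : ∀ i ∈ (Finset.univ : Finset (Fin n)),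
        hcv (U z) i * vcvstar Γ z (tconnStar Γ h hinv V W z) i
          = hcv (U z) i * act V (fun w => vcvstar Γ w (W w) i) z
            + hcv (U z) i
                * (∑ a, ∑ b, (hcv (V z) a * vcvstar Γ z (W z) b) * Cstar Γ h hinv z.1 a b i) := by
      intro i _
      rw [vcv_tconn Γ h hinv V W z i, mul_add]
    calc pwStar Γ ε U (fun w => tconnStar Γ h hinv V W w) z
        = (∑ i, vcvstar Γ z (U z) i * hcv (tconnStar Γ h hinv V W z) i)
          + ε * ∑ i, hcv (U z) i * vcvstar Γ z (tconnStar Γ h hinv V W z) i := rfl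
      _ = _ := by
          rw [Finset.sum_congr rfl c1, Finset.sum_congr rfl c2, Finset.sum_add_distrib,
            Finset.sum_add_distrib, mul_add]
  have eT : pwStar Γ ε
        (fun w => tconnStar Γ h hinv U V w - tconnStar Γ h hinv V U w - lie U V w) W z
      = (((∑ i, (∑ a, ∑ b, (hcv (U z) a * vcvstar Γ z (V z) b) * Cstar Γ h hinv z.1 a b i)
              * hcv (W z) i)
          - ∑ i, (∑ a, ∑ b, (hcv (V z) a * vcvstar Γ z (U z) b) * Cstar Γ h hinv z.1 a b i)
              * hcv (W z) i)
        - ((∑ i, (∑ a, hcv (V z) a * act U (fun w => cstar Γ w a i) z) * hcv (W z) i)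
          - ∑ i, (∑ a, hcv (U z) a * act V (fun w => cstar Γ w a i) z) * hcv (W z) i))
        + (ε * ∑ i, (∑ a, ∑ b, (hcv (U z) a * hcv (V z) b) * Γ z.1 a b i)
              * vcvstar Γ z (W z) i
          - ε * ∑ i, (∑ a, ∑ b, (hcv (V z) a * hcv (U z) b) * Γ z.1 a b i)
              * vcvstar Γ z (W z) i) := by
    have cvT : ∀ i ∈ (Finset.univ : Finset (Fin n)),
        vcvstar Γ z (tconnStar Γ h hinv U V z - tconnStar Γ h hinv V U z - lie U V z) i
            * hcv (W z) i
          = (((∑ a, ∑ b, (hcv (U z) a * vcvstar Γ z (V z) b) * Cstar Γ h hinv z.1 a b i)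
                * hcv (W z) i
              - (∑ a, ∑ b, (hcv (V z) a * vcvstar Γ z (U z) b) * Cstar Γ h hinv z.1 a b i)
                * hcv (W z) i)
            - ((∑ a, hcv (V z) a * act U (fun w => cstar Γ w a i) z) * hcv (W z) i
              - (∑ a, hcv (U z) a * act V (fun w => cstar Γ w a i) z) * hcv (W z) i)) := by
      intro i _
      rw [vcv_sub, vcv_sub, vcv_tconn Γ h hinv U V z i, vcv_tconn Γ h hinv V U z i,
        vcv_lie Γ hΓ U V z hU hV i]
      ring
    have chT : ∀ i ∈ (Finset.univ : Finset (Fin n)),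
        hcv (tconnStar Γ h hinv U V z - tconnStar Γ h hinv V U z - lie U V z) i
            * vcvstar Γ z (W z) i
          = (∑ a, ∑ b, (hcv (U z) a * hcv (V z) b) * Γ z.1 a b i) * vcvstar Γ z (W z) i
            - (∑ a, ∑ b, (hcv (V z) a * hcv (U z) b) * Γ z.1 a b i) * vcvstar Γ z (W z) i := by
      intro i _
      rw [hcv_sub, hcv_sub, hcv_tconn Γ h hinv U V z i, hcv_tconn Γ h hinv V U z i,
        hcv_lie U V z hU hV i]
      ring
    calc pwStar Γ ε
          (fun w => tconnStar Γ h hinv U V w - tconnStar Γ h hinv V U w - lie U V w) W z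
        = (∑ i, vcvstar Γ z
              (tconnStar Γ h hinv U V z - tconnStar Γ h hinv V U z - lie U V z) i
            * hcv (W z) i)
          + ε * ∑ i, hcv (tconnStar Γ h hinv U V z - tconnStar Γ h hinv V U z - lie U V z) i
            * vcvstar Γ z (W z) i := rfl
      _ = _ := by
          rw [Finset.sum_congr rfl cvT, Finset.sum_congr rfl chT]
          simp only [Finset.sum_sub_distrib]
          rw [mul_sub]
  have dd1 : ∀ i ∈ (Finset.univ : Finset (Fin n)),
      (∑ a, hcv (V z) a * act U (fun w => cstar Γ w a i) z) * hcv (W z) i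
        = (∑ a, hcv (V z) a * (∑ k, (U z).2 k * Γ z.1 a i k
            + ∑ k, z.2 k * ∑ j, (U z).1 j * pd j (fun x => Γ x a i k) z.1)) * hcv (W z) i := by
    intro i _
    congr 1
    exact Finset.sum_congr rfl fun a _ => by rw [act_cstar Γ hΓ U z a i]
  have dd2 : ∀ i ∈ (Finset.univ : Finset (Fin n)),
      (∑ a, hcv (U z) a * act V (fun w => cstar Γ w a i) z) * hcv (W z) i
        = (∑ a, hcv (U z) a * (∑ k, (V z).2 k * Γ z.1 a i k
            + ∑ k, z.2 k * ∑ j, (V z).1 j * pd j (fun x => Γ x a i k) z.1)) * hcv (W z) i := by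
    intro i _
    congr 1
    exact Finset.sum_congr rfl fun a _ => by rw [act_cstar Γ hΓ V z a i]
  unfold dTensor
  rw [eA1, eA2, eA3, eB1, eB2, eB3, eT, Finset.sum_congr rfl dd1, Finset.sum_congr rfl dd2]
  have hA := algA Γ h hinv z (U z) (V z) (W z) (fun i j r => hC z.1 i j r)
  have hB := algB Γ hflat z (U z) (V z) (W z)
  linear_combination hB - ε * hA

end Key

/-- if `(M, h, ∇)` is a quasi-statistical manifold with `∇` flat and `h`
symmetric (resp. skew-symmetric), then `(T*M, h̃_+, ∇̃)` (resp. `(T*M, h̃_-, ∇̃)`) is a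
quasi-statistical manifold: `d^{∇̃} h̃_± = 0`. -/
theorem statement16 {n : ℕ} (Γ : Pt n → Fin n → Fin n → Fin n → ℝ)
    (h hinv : Pt n → Fin n → Fin n → ℝ)
    (hsmoothΓ : ∀ i j k, Smooth fun x => Γ x i j k)
    (hsmoothh : ∀ i j, Smooth fun x => h x i j)
    (hsmoothhinv : ∀ i j, Smooth fun x => hinv x i j)
    (hleft : ∀ x i j, ∑ k, hinv x i k * h x k j = if i = j then (1 : ℝ) else 0)
    (hright : ∀ x i j, ∑ k, h x i k * hinv x k j = if i = j then (1 : ℝ) else 0)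
    (hqs : ∀ x i j k, dnabla Γ h x i j k = 0)
    (hflat : ∀ x i j k l, curv Γ x i j k l = 0) :
    ((∀ x i j, h x i j = h x j i) →
      ∀ U V W : Tot n → Tot n, Smooth U → Smooth V → Smooth W → ∀ z,
        dTensor (tconnStar Γ h hinv) (pwStar Γ 1) U V W z = 0) ∧
    ((∀ x i j, h x i j = - h x j i) →
      ∀ U V W : Tot n → Tot n, Smooth U → Smooth V → Smooth W → ∀ z,
        dTensor (tconnStar Γ h hinv) (pwStar Γ (-1)) U V W z = 0) := by
  constructor
  · intro hsym U V W hU hV hW z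
    refine key Γ h hinv 1 hsmoothΓ ?_ hflat U V W hU hV hW z
    intro x i j r
    exact cstar_symm Γ h hinv 1
      (fun x a b => by rw [hsym x a b]; ring) hsmoothh hsmoothhinv hleft hqs x i j r
  · intro hskew U V W hU hV hW z
    refine key Γ h hinv (-1) hsmoothΓ ?_ hflat U V W hU hV hW z
    intro x i j r
    exact cstar_symm Γ h hinv (-1)
      (fun x a b => by rw [hskew x a b]; ring) hsmoothh hsmoothhinv hleft hqs x i j r

end GQSCoord
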